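/- Let H be a separable Hilbert space and U, W ∈ B(H) with W invertible and U unitary. Suppose that for each m ∈ ℕ there is a strictly increasing sequence {n_k} ⊆ ℕ such that for every k the series Σ_{l=1}^∞ ‖W^{l n_k} P_m‖ and Σ_{l=1}^∞ ‖W^{−l n_k} P_m‖ converge, and both sums tend to 0 as k → ∞. Then the sets of periodic elements of {T_{U,W}^n} and of {S_{U,W}^n} are each dense in B_0(H). -/

import Mathlib

set_option linter.unusedSectionVars false
set_option linter.unusedVariables false

open scoped InnerProductSpace
open Filter

noncomputable section

variable {H : Type*} [NormedAddCommGroup H] [InnerProductSpace ℂ H] [CompleteSpace H]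

/-- `m(F) := inf_{‖x‖=1} ‖F x‖`. -/
def mop (F : H →L[ℂ] H) : ℝ := ⨅ x : {x : H // ‖x‖ = 1}, ‖F x‖

/-- The orthogonal projection onto a finite-dimensional subspace, as an endomorphism of `H`. -/
def projCLM (K : Submodule ℂ H) (hK : FiniteDimensional ℂ K) : H →L[ℂ] H :=
  letI := hK
  letI : CompleteSpace K := FiniteDimensional.complete ℂ K
  K.subtypeL ∘L K.orthogonalProjectionOnto

/-- `L_m`, the span of the first `m` basis vectors. -/
def Lspan (b : HilbertBasis ℕ ℂ H) (m : ℕ) : Submodule ℂ H :=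
  Submodule.span ℂ (b '' Set.Iio m)

theorem Lspan_fd (b : HilbertBasis ℕ ℂ H) (m : ℕ) : FiniteDimensional ℂ (Lspan b m) :=
  FiniteDimensional.span_of_finite ℂ ((Set.finite_Iio m).image b)

/-- `P_m`, the orthogonal projection onto `L_m`. -/
def Pproj (b : HilbertBasis ℕ ℂ H) (m : ℕ) : H →L[ℂ] H := projCLM (Lspan b m) (Lspan_fd b m)

/-- `T_{U,W}^n (F) = W^n F U^n`. -/
def Tpow (W : H ≃L[ℂ] H) (U : H →L[ℂ] H) (n : ℕ) (F : H →L[ℂ] H) : H →L[ℂ] H :=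
  ((W : H →L[ℂ] H) ^ n) ∘L F ∘L (U ^ n)

/-- `S_{U,W}^n (F) = W^{-n} F U^{-n}` (here `U⁻¹ = star U` since `U` is unitary). -/
def Spow (W : H ≃L[ℂ] H) (U : H →L[ℂ] H) (n : ℕ) (F : H →L[ℂ] H) : H →L[ℂ] H :=
  ((W.symm : H →L[ℂ] H) ^ n) ∘L F ∘L ((star U) ^ n)

/-- The cosine operator function `C^{(n)} = (1/2)(T^n + S^n)`. -/
def Cpow (W : H ≃L[ℂ] H) (U : H →L[ℂ] H) (n : ℕ) (F : H →L[ℂ] H) : H →L[ℂ] H :=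
  (2 : ℂ)⁻¹ • (Tpow W U n F + Spow W U n F)

/-- `B₀(H)`, the compact operators on `H`, as a submodule of `B(H)`. -/
def B0 : Submodule ℂ (H →L[ℂ] H) := compactOperator (RingHom.id ℂ) H H

theorem Tpow_mem (W : H ≃L[ℂ] H) (U : H →L[ℂ] H) (n : ℕ) (F : H →L[ℂ] H)
    (hF : IsCompactOperator F) : Tpow W U n F ∈ B0 (H := H) :=
  (hF.comp_clm (U ^ n)).clm_comp ((W : H →L[ℂ] H) ^ n)

theorem Spow_mem (W : H ≃L[ℂ] H) (U : H →L[ℂ] H) (n : ℕ) (F : H →L[ℂ] H)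
    (hF : IsCompactOperator F) : Spow W U n F ∈ B0 (H := H) :=
  (hF.comp_clm ((star U) ^ n)).clm_comp ((W.symm : H →L[ℂ] H) ^ n)

theorem Cpow_mem (W : H ≃L[ℂ] H) (U : H →L[ℂ] H) (n : ℕ) (F : H →L[ℂ] H)
    (hF : IsCompactOperator F) : Cpow W U n F ∈ B0 (H := H) :=
  Submodule.smul_mem _ _ (Submodule.add_mem _ (Tpow_mem W U n F hF) (Spow_mem W U n F hF))

/-- `T^n` as a map of `B₀(H)`. -/
def TB0 (W : H ≃L[ℂ] H) (U : H →L[ℂ] H) (n : ℕ) (F : B0 (H := H)) : B0 (H := H) :=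
  ⟨Tpow W U n F.1, Tpow_mem W U n F.1 F.2⟩

/-- `C^{(n)}` as a map of `B₀(H)`. -/
def CB0 (W : H ≃L[ℂ] H) (U : H →L[ℂ] H) (n : ℕ) (F : B0 (H := H)) : B0 (H := H) :=
  ⟨Cpow W U n F.1, Cpow_mem W U n F.1 F.2⟩

/-- The absolute value `|G| = sqrt(G* G)` of an operator. -/
def absop (G : H →L[ℂ] H) : H →L[ℂ] H := CFC.sqrt (star G * G)

/-- The trace computed in the orthonormal basis `b`. -/
def trB (b : HilbertBasis ℕ ℂ H) (A : H →L[ℂ] H) : ℂ := ∑' j, ⟪b j, A (b j)⟫_ℂ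

/-- `G` is trace class (w.r.t. the basis `b`): the trace of `|G|` converges. -/
def IsTraceClassB (b : HilbertBasis ℕ ℂ H) (G : H →L[ℂ] H) : Prop :=
  Summable fun j => ⟪b j, absop G (b j)⟫_ℂ

/-- The trace norm `‖G‖₁ = tr |G|` computed in the basis `b`. -/
def traceNormB (b : HilbertBasis ℕ ℂ H) (G : H →L[ℂ] H) : ℝ :=
  ∑' j, (⟪b j, absop G (b j)⟫_ℂ).re

/-- `L_n` for a basis indexed by positive integers. -/
def LspanP (b : HilbertBasis ℕ+ ℂ H) (n : ℕ) : Submodule ℂ H :=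
  Submodule.span ℂ (b '' {j : ℕ+ | (j : ℕ) ≤ n})

theorem LspanP_fd (b : HilbertBasis ℕ+ ℂ H) (n : ℕ) : FiniteDimensional ℂ (LspanP b n) := by
  refine FiniteDimensional.span_of_finite ℂ (Set.Finite.image b ?_)
  have : {j : ℕ+ | (j : ℕ) ≤ n} = ((↑) : ℕ+ → ℕ) ⁻¹' Set.Iic n := rfl
  rw [this]
  exact (Set.finite_Iic n).preimage (Set.injOn_of_injective PNat.coe_injective)

/-- `P_n` for a basis indexed by positive integers. -/
def PprojP (b : HilbertBasis ℕ+ ℂ H) (n : ℕ) : H →L[ℂ] H := projCLM (LspanP b n) (LspanP_fd b n)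


section Aux

variable (W : H ≃L[ℂ] H) (U : H →L[ℂ] H)

lemma Tpow_zero' (F : H →L[ℂ] H) : Tpow W U 0 F = F := by
  simp [Tpow, ContinuousLinearMap.one_def]

lemma Spow_zero' (F : H →L[ℂ] H) : Spow W U 0 F = F := by
  simp [Spow, ContinuousLinearMap.one_def]

lemma Tpow_add' (a c : ℕ) (F : H →L[ℂ] H) :
    Tpow W U (a + c) F = Tpow W U a (Tpow W U c F) := by
  ext x
  simp only [Tpow, ContinuousLinearMap.comp_apply, pow_add, ContinuousLinearMap.mul_apply]
  rw [← ContinuousLinearMap.mul_apply (U ^ c) (U ^ a), ← pow_add U c a, add_comm c a,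
    pow_add, ContinuousLinearMap.mul_apply]

lemma Spow_add' (a c : ℕ) (F : H →L[ℂ] H) :
    Spow W U (a + c) F = Spow W U a (Spow W U c F) := by
  ext x
  simp only [Spow, ContinuousLinearMap.comp_apply, pow_add, ContinuousLinearMap.mul_apply]
  rw [← ContinuousLinearMap.mul_apply ((star U) ^ c) ((star U) ^ a), ← pow_add, add_comm c a,
    pow_add, ContinuousLinearMap.mul_apply]

lemma W_cancel (n : ℕ) (x : H) :
    ((W : H →L[ℂ] H) ^ n) (((W.symm : H →L[ℂ] H) ^ n) x) = x := by
  induction n with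
  | zero => simp
  | succ n ih =>
    rw [pow_succ, pow_succ', ContinuousLinearMap.mul_apply, ContinuousLinearMap.mul_apply]
    simp only [ContinuousLinearEquiv.coe_coe, ContinuousLinearEquiv.apply_symm_apply]
    exact ih

lemma W_cancel' (n : ℕ) (x : H) :
    ((W.symm : H →L[ℂ] H) ^ n) (((W : H →L[ℂ] H) ^ n) x) = x := by
  induction n with
  | zero => simp
  | succ n ih =>
    rw [pow_succ, pow_succ', ContinuousLinearMap.mul_apply, ContinuousLinearMap.mul_apply]
    simp only [ContinuousLinearEquiv.coe_coe, ContinuousLinearEquiv.symm_apply_apply]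
    exact ih

lemma U_cancel (hU : U ∈ unitary (H →L[ℂ] H)) (n : ℕ) (x : H) :
    ((star U) ^ n) ((U ^ n) x) = x := by
  induction n with
  | zero => simp
  | succ n ih =>
    rw [pow_succ, pow_succ', ContinuousLinearMap.mul_apply, ContinuousLinearMap.mul_apply,
      ← ContinuousLinearMap.mul_apply (star U) U, hU.1]
    simpa using ih

lemma U_cancel' (hU : U ∈ unitary (H →L[ℂ] H)) (n : ℕ) (x : H) :
    (U ^ n) (((star U) ^ n) x) = x := by
  induction n with
  | zero => simp
  | succ n ih =>
    rw [pow_succ, pow_succ', ContinuousLinearMap.mul_apply, ContinuousLinearMap.mul_apply,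
      ← ContinuousLinearMap.mul_apply U (star U), hU.2]
    simpa using ih

lemma Tpow_Spow (hU : U ∈ unitary (H →L[ℂ] H)) (n : ℕ) (F : H →L[ℂ] H) :
    Tpow W U n (Spow W U n F) = F := by
  ext x
  simp only [Tpow, Spow, ContinuousLinearMap.comp_apply, U_cancel U hU, W_cancel W]

lemma Spow_Tpow (hU : U ∈ unitary (H →L[ℂ] H)) (n : ℕ) (F : H →L[ℂ] H) :
    Spow W U n (Tpow W U n F) = F := by
  ext x
  simp only [Tpow, Spow, ContinuousLinearMap.comp_apply, U_cancel' U hU, W_cancel' W]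

lemma norm_unitary_le (hU : U ∈ unitary (H →L[ℂ] H)) : ‖U‖ ≤ 1 := by
  have h1 : ‖star U * U‖ = ‖U‖ * ‖U‖ := CStarRing.norm_star_mul_self
  rw [hU.1] at h1
  have h2 : ‖(1 : H →L[ℂ] H)‖ ≤ 1 := ContinuousLinearMap.norm_id_le
  nlinarith [norm_nonneg U]

lemma norm_unitary_pow_le (hU : U ∈ unitary (H →L[ℂ] H)) (n : ℕ) : ‖U ^ n‖ ≤ 1 := by
  have : U ^ n ∈ unitary (H →L[ℂ] H) := pow_mem hU n
  exact norm_unitary_le _ this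

/-- `T^n` as a continuous linear map on `B(H)`. -/
def TL (n : ℕ) : (H →L[ℂ] H) →L[ℂ] (H →L[ℂ] H) :=
  (ContinuousLinearMap.compL ℂ H H H ((W : H →L[ℂ] H) ^ n)).comp
    ((ContinuousLinearMap.compL ℂ H H H).flip (U ^ n))

lemma TL_apply (n : ℕ) (F : H →L[ℂ] H) : TL W U n F = Tpow W U n F := by
  ext x; simp [TL, Tpow]

/-- `S^n` as a continuous linear map on `B(H)`. -/
def SL (n : ℕ) : (H →L[ℂ] H) →L[ℂ] (H →L[ℂ] H) :=
  (ContinuousLinearMap.compL ℂ H H H ((W.symm : H →L[ℂ] H) ^ n)).comp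
    ((ContinuousLinearMap.compL ℂ H H H).flip ((star U) ^ n))

lemma SL_apply (n : ℕ) (F : H →L[ℂ] H) : SL W U n F = Spow W U n F := by
  ext x; simp [SL, Spow]

lemma Tpow_norm_le (hU : U ∈ unitary (H →L[ℂ] H)) (b : HilbertBasis ℕ ℂ H) (m j : ℕ)
    (F : H →L[ℂ] H) :
    ‖Tpow W U j ((Pproj b m) ∘L F)‖ ≤ ‖((W : H →L[ℂ] H) ^ j) ∘L Pproj b m‖ * ‖F‖ := by
  have heq : Tpow W U j ((Pproj b m) ∘L F) =
      (((W : H →L[ℂ] H) ^ j) ∘L Pproj b m) ∘L (F ∘L (U ^ j)) := by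
    ext x; simp [Tpow]
  rw [heq]
  calc ‖(((W : H →L[ℂ] H) ^ j) ∘L Pproj b m) ∘L (F ∘L (U ^ j))‖
      ≤ ‖((W : H →L[ℂ] H) ^ j) ∘L Pproj b m‖ * ‖F ∘L (U ^ j)‖ :=
        ContinuousLinearMap.opNorm_comp_le _ _
  _ ≤ ‖((W : H →L[ℂ] H) ^ j) ∘L Pproj b m‖ * (‖F‖ * ‖U ^ j‖) :=
        mul_le_mul_of_nonneg_left (ContinuousLinearMap.opNorm_comp_le _ _) (norm_nonneg _)
  _ ≤ ‖((W : H →L[ℂ] H) ^ j) ∘L Pproj b m‖ * (‖F‖ * 1) := by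
        refine mul_le_mul_of_nonneg_left ?_ (norm_nonneg _)
        exact mul_le_mul_of_nonneg_left (norm_unitary_pow_le U hU j) (norm_nonneg _)
  _ = ‖((W : H →L[ℂ] H) ^ j) ∘L Pproj b m‖ * ‖F‖ := by ring

lemma Spow_norm_le (hU : U ∈ unitary (H →L[ℂ] H)) (b : HilbertBasis ℕ ℂ H) (m j : ℕ)
    (F : H →L[ℂ] H) :
    ‖Spow W U j ((Pproj b m) ∘L F)‖ ≤ ‖((W.symm : H →L[ℂ] H) ^ j) ∘L Pproj b m‖ * ‖F‖ := by
  have heq : Spow W U j ((Pproj b m) ∘L F) =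
      (((W.symm : H →L[ℂ] H) ^ j) ∘L Pproj b m) ∘L (F ∘L ((star U) ^ j)) := by
    ext x; simp [Spow]
  rw [heq]
  calc ‖(((W.symm : H →L[ℂ] H) ^ j) ∘L Pproj b m) ∘L (F ∘L ((star U) ^ j))‖
      ≤ ‖((W.symm : H →L[ℂ] H) ^ j) ∘L Pproj b m‖ * ‖F ∘L ((star U) ^ j)‖ :=
        ContinuousLinearMap.opNorm_comp_le _ _
  _ ≤ ‖((W.symm : H →L[ℂ] H) ^ j) ∘L Pproj b m‖ * (‖F‖ * ‖(star U) ^ j‖) :=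
        mul_le_mul_of_nonneg_left (ContinuousLinearMap.opNorm_comp_le _ _) (norm_nonneg _)
  _ ≤ ‖((W.symm : H →L[ℂ] H) ^ j) ∘L Pproj b m‖ * (‖F‖ * 1) := by
        refine mul_le_mul_of_nonneg_left ?_ (norm_nonneg _)
        exact mul_le_mul_of_nonneg_left
          (norm_unitary_pow_le (star U) (Unitary.star_mem hU) j) (norm_nonneg _)
  _ = ‖((W.symm : H →L[ℂ] H) ^ j) ∘L Pproj b m‖ * ‖F‖ := by ring

end Aux

lemma projCLM_norm_apply_le (K : Submodule ℂ H) (hK : FiniteDimensional ℂ K) (y : H) :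
    ‖projCLM K hK y‖ ≤ ‖y‖ := by
  letI := hK
  letI : CompleteSpace K := FiniteDimensional.complete ℂ K
  calc ‖projCLM K hK y‖ = ‖(K.orthogonalProjectionOnto y : K)‖ := rfl
  _ ≤ 1 * ‖y‖ := (K.orthogonalProjectionOnto).le_of_opNorm_le (Submodule.orthogonalProjectionOnto_norm_le K) y
  _ = ‖y‖ := one_mul _

lemma projCLM_norm_le (K : Submodule ℂ H) (hK : FiniteDimensional ℂ K) :
    ‖projCLM K hK‖ ≤ 1 :=
  ContinuousLinearMap.opNorm_le_bound _ zero_le_one fun y => by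
    simpa using projCLM_norm_apply_le K hK y

lemma projCLM_min (K : Submodule ℂ H) (hK : FiniteDimensional ℂ K) (y v : H) (hv : v ∈ K) :
    ‖y - projCLM K hK y‖ ≤ ‖y - v‖ := by
  letI := hK
  letI : CompleteSpace K := FiniteDimensional.complete ℂ K
  have : ‖y - projCLM K hK y‖ = ⨅ x : K, ‖y - x‖ := Submodule.starProjection_minimal y
  rw [this]
  exact ciInf_le ⟨0, fun r ⟨x, hx⟩ => hx ▸ norm_nonneg _⟩ (⟨v, hv⟩ : K)

lemma Lspan_mono (b : HilbertBasis ℕ ℂ H) {m m' : ℕ} (h : m ≤ m') : Lspan b m ≤ Lspan b m' :=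
  Submodule.span_mono (Set.image_mono (Set.Iio_subset_Iio h))

lemma Pproj_mem (b : HilbertBasis ℕ ℂ H) (m : ℕ) (y : H) : Pproj b m y ∈ Lspan b m := by
  letI := Lspan_fd b m
  letI : CompleteSpace (Lspan b m) := FiniteDimensional.complete ℂ _
  exact (((Lspan b m).orthogonalProjectionOnto) y).2

lemma Pproj_dist_antitone (b : HilbertBasis ℕ ℂ H) (y : H) :
    Antitone (fun m => ‖y - Pproj b m y‖) := by
  intro m m' h
  exact projCLM_min _ _ y _ (Lspan_mono b h (Pproj_mem b m y))

lemma tendsto_Pproj (b : HilbertBasis ℕ ℂ H) (y : H) :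
    Tendsto (fun m => ‖y - Pproj b m y‖) atTop (nhds 0) := by
  have hsum : Tendsto (fun m => ∑ i ∈ Finset.range m, b.repr y i • b i) atTop (nhds y) :=
    (b.hasSum_repr y).tendsto_sum_nat
  have h0 : Tendsto (fun m => ‖y - ∑ i ∈ Finset.range m, b.repr y i • b i‖) atTop (nhds 0) := by
    rw [show (0:ℝ) = ‖y - y‖ by simp]
    exact (tendsto_const_nhds.sub hsum).norm
  refine squeeze_zero (fun m => norm_nonneg _) (fun m => ?_) h0
  refine projCLM_min _ _ y _ ?_
  refine Submodule.sum_mem _ fun i hi => Submodule.smul_mem _ _ ?_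
  exact Submodule.subset_span ⟨i, Finset.mem_range.mp hi, rfl⟩

lemma compact_approx (b : HilbertBasis ℕ ℂ H) (F : H →L[ℂ] H) (hF : IsCompactOperator F)
    {ε : ℝ} (hε : 0 < ε) : ∃ m, ‖F - (Pproj b m) ∘L F‖ < ε := by
  have hK : IsCompact (closure (F '' Metric.closedBall 0 1)) := by
    have h := IsCompactOperator.isCompact_closure_image_closedBall (𝕜₁ := ℂ)
        (f := (F : H →ₗ[ℂ] H)) hF 1
    simpa using h
  set K := closure (F '' Metric.closedBall 0 1) with hKdef
  set V : ℕ → Set H := fun m => {y | ‖y - Pproj b m y‖ < ε / 2} with hV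
  have hVopen : ∀ m, IsOpen (V m) := by
    intro m
    have : Continuous fun y => ‖y - Pproj b m y‖ :=
      (continuous_id.sub (Pproj b m).continuous).norm
    exact isOpen_lt this continuous_const
  have hVmono : ∀ {m m'}, m ≤ m' → V m ⊆ V m' := by
    intro m m' h y hy
    exact lt_of_le_of_lt (Pproj_dist_antitone b y h) hy
  have hcover : K ⊆ ⋃ m, V m := by
    intro y _
    have h2 : ∀ᶠ m in atTop, ‖y - Pproj b m y‖ < ε / 2 :=
      (tendsto_Pproj b y).eventually_lt_const (by positivity)
    rcases h2.exists with ⟨m, hm⟩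
    exact Set.mem_iUnion.mpr ⟨m, hm⟩
  obtain ⟨t, ht⟩ := hK.elim_finite_subcover V hVopen hcover
  set M := t.sup id with hM
  have hKV : K ⊆ V M := by
    intro y hy
    rcases Set.mem_iUnion₂.mp (ht hy) with ⟨i, hi, hyi⟩
    exact hVmono (Finset.le_sup (f := id) hi) hyi
  refine ⟨M, lt_of_le_of_lt ?_ (half_lt_self hε)⟩
  refine ContinuousLinearMap.opNorm_le_bound' _ (le_of_lt (by positivity)) fun x hx => ?_
  set u : H := (‖x‖ : ℂ)⁻¹ • x with hu
  have hxu : x = (‖x‖ : ℂ) • u := by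
    rw [hu, smul_smul, mul_inv_cancel₀ (by exact_mod_cast hx), one_smul]
  have hunorm : ‖u‖ = 1 := by
    rw [hu, norm_smul, norm_inv, Complex.norm_real, Real.norm_eq_abs,
      abs_of_nonneg (norm_nonneg x), inv_mul_cancel₀ hx]
  have huK : F u ∈ K := subset_closure ⟨u, by simp [Metric.mem_closedBall, hunorm], rfl⟩
  have hval : ‖F u - Pproj b M (F u)‖ < ε / 2 := hKV huK
  have key : ‖(F - (Pproj b M) ∘L F) x‖ = ‖x‖ * ‖F u - Pproj b M (F u)‖ := by
    conv_lhs => rw [hxu]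
    rw [map_smul, norm_smul, Complex.norm_real, Real.norm_eq_abs,
      abs_of_nonneg (norm_nonneg x)]
    simp [ContinuousLinearMap.sub_apply]
  rw [key, mul_comm]
  exact mul_le_mul_of_nonneg_right (le_of_lt hval) (norm_nonneg x)


lemma exists_periodic_close (b : HilbertBasis ℕ ℂ H) (W : H ≃L[ℂ] H) (U : H →L[ℂ] H)
    (hU : U ∈ unitary (H →L[ℂ] H))
    (hyp : ∀ m : ℕ, ∃ n : ℕ → ℕ, StrictMono n ∧
      (∀ k, Summable (fun l : ℕ => ‖((W : H →L[ℂ] H) ^ ((l + 1) * n k)) ∘L Pproj b m‖) ∧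
        Summable (fun l : ℕ => ‖((W.symm : H →L[ℂ] H) ^ ((l + 1) * n k)) ∘L Pproj b m‖)) ∧
      Filter.Tendsto
        (fun k => ∑' l : ℕ, ‖((W : H →L[ℂ] H) ^ ((l + 1) * n k)) ∘L Pproj b m‖)
        atTop (nhds 0) ∧
      Filter.Tendsto
        (fun k => ∑' l : ℕ, ‖((W.symm : H →L[ℂ] H) ^ ((l + 1) * n k)) ∘L Pproj b m‖)
        atTop (nhds 0))
    (F : H →L[ℂ] H) (hF : IsCompactOperator F) (ε : ℝ) (hε : 0 < ε) :
    ∃ G : H →L[ℂ] H, IsCompactOperator G ∧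
      (∃ N' : ℕ, 0 < N' ∧ (∀ k : ℕ, Tpow W U (k * N') G = G) ∧
        (∀ k : ℕ, Spow W U (k * N') G = G)) ∧ ‖F - G‖ < ε := by
  obtain ⟨m, hm⟩ := compact_approx b F hF (half_pos hε)
  obtain ⟨n, hmono, hsum, hT0, hS0⟩ := hyp m
  set P := Pproj b m with hP
  set F' := P ∘L F with hF'def
  set δ := ε / (4 * (‖F‖ + 1)) with hδ
  have hδpos : 0 < δ := by positivity
  have hev : ∀ᶠ k in atTop,
      ((∑' l : ℕ, ‖((W : H →L[ℂ] H) ^ ((l + 1) * n k)) ∘L P‖) < δ ∧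
        (∑' l : ℕ, ‖((W.symm : H →L[ℂ] H) ^ ((l + 1) * n k)) ∘L P‖) < δ) ∧ 1 ≤ k :=
    ((hT0.eventually_lt_const hδpos).and (hS0.eventually_lt_const hδpos)).and
      (eventually_ge_atTop 1)
  obtain ⟨k, ⟨hTk, hSk⟩, hk1⟩ := hev.exists
  set N := n k with hNdef
  have hNpos : 0 < N := (Nat.zero_le (n 0)).trans_lt (hmono (by omega))
  obtain ⟨hsumTn, hsumSn⟩ := hsum k
  have hTle : ∀ l : ℕ, ‖Tpow W U ((l + 1) * N) F'‖ ≤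
      ‖((W : H →L[ℂ] H) ^ ((l + 1) * N)) ∘L P‖ * ‖F‖ :=
    fun l => Tpow_norm_le W U hU b m _ F
  have hSle : ∀ l : ℕ, ‖Spow W U ((l + 1) * N) F'‖ ≤
      ‖((W.symm : H →L[ℂ] H) ^ ((l + 1) * N)) ∘L P‖ * ‖F‖ :=
    fun l => Spow_norm_le W U hU b m _ F
  have hsumTnorm : Summable (fun l : ℕ => ‖Tpow W U ((l + 1) * N) F'‖) :=
    Summable.of_nonneg_of_le (fun l => norm_nonneg _) hTle (hsumTn.mul_right ‖F‖)
  have hsumSnorm : Summable (fun l : ℕ => ‖Spow W U ((l + 1) * N) F'‖) :=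
    Summable.of_nonneg_of_le (fun l => norm_nonneg _) hSle (hsumSn.mul_right ‖F‖)
  have hsumT : Summable (fun l : ℕ => Tpow W U ((l + 1) * N) F') := hsumTnorm.of_norm
  have hsumS : Summable (fun l : ℕ => Spow W U ((l + 1) * N) F') := hsumSnorm.of_norm
  set AT := ∑' l : ℕ, Tpow W U ((l + 1) * N) F' with hAT
  set AS := ∑' l : ℕ, Spow W U ((l + 1) * N) F' with hAS
  set G := F' + AT + AS with hG
  -- norm bounds
  have hquarter : δ * (‖F‖ + 1) = ε / 4 := by
    rw [hδ]; field_simp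
  have hATle : ‖AT‖ ≤ ε / 4 := by
    calc ‖AT‖ ≤ ∑' l : ℕ, ‖Tpow W U ((l + 1) * N) F'‖ := norm_tsum_le_tsum_norm hsumTnorm
    _ ≤ ∑' l : ℕ, ‖((W : H →L[ℂ] H) ^ ((l + 1) * N)) ∘L P‖ * ‖F‖ :=
        Summable.tsum_le_tsum hTle hsumTnorm (hsumTn.mul_right ‖F‖)
    _ = (∑' l : ℕ, ‖((W : H →L[ℂ] H) ^ ((l + 1) * N)) ∘L P‖) * ‖F‖ := tsum_mul_right
    _ ≤ δ * ‖F‖ := mul_le_mul_of_nonneg_right hTk.le (norm_nonneg F)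
    _ ≤ δ * (‖F‖ + 1) := by nlinarith
    _ = ε / 4 := hquarter
  have hASle : ‖AS‖ ≤ ε / 4 := by
    calc ‖AS‖ ≤ ∑' l : ℕ, ‖Spow W U ((l + 1) * N) F'‖ := norm_tsum_le_tsum_norm hsumSnorm
    _ ≤ ∑' l : ℕ, ‖((W.symm : H →L[ℂ] H) ^ ((l + 1) * N)) ∘L P‖ * ‖F‖ :=
        Summable.tsum_le_tsum hSle hsumSnorm (hsumSn.mul_right ‖F‖)
    _ = (∑' l : ℕ, ‖((W.symm : H →L[ℂ] H) ^ ((l + 1) * N)) ∘L P‖) * ‖F‖ := tsum_mul_right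
    _ ≤ δ * ‖F‖ := mul_le_mul_of_nonneg_right hSk.le (norm_nonneg F)
    _ ≤ δ * (‖F‖ + 1) := by nlinarith
    _ = ε / 4 := hquarter
  have hnorm : ‖F - G‖ < ε := by
    have hFG : F - G = (F - F') - (AT + AS) := by rw [hG]; abel
    calc ‖F - G‖ = ‖(F - F') - (AT + AS)‖ := by rw [hFG]
    _ ≤ ‖F - F'‖ + ‖AT + AS‖ := norm_sub_le _ _
    _ ≤ ‖F - F'‖ + (‖AT‖ + ‖AS‖) := add_le_add (le_refl _) (norm_add_le _ _)
    _ < ε / 2 + (ε / 4 + ε / 4) := add_lt_add_of_lt_of_le hm (add_le_add hATle hASle)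
    _ = ε := by ring
  -- additivity of Tpow
  have hadd : ∀ X Y : H →L[ℂ] H, Tpow W U N (X + Y) = Tpow W U N X + Tpow W U N Y := by
    intro X Y
    rw [← TL_apply, ← TL_apply, ← TL_apply, map_add]
  -- the fixed point property
  have hmapT : Tpow W U N AT = ∑' l : ℕ, Tpow W U ((l + 2) * N) F' := by
    rw [← TL_apply, hAT, ContinuousLinearMap.map_tsum _ hsumT]
    refine tsum_congr fun l => ?_
    rw [TL_apply, ← Tpow_add']
    congr 1; ring
  have hmapS : Tpow W U N AS = ∑' l : ℕ, Spow W U (l * N) F' := by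
    rw [← TL_apply, hAS, ContinuousLinearMap.map_tsum _ hsumS]
    refine tsum_congr fun l => ?_
    rw [TL_apply]
    have h1 : (l + 1) * N = N + l * N := by ring
    rw [h1, Spow_add', Tpow_Spow W U hU]
  have hsumS0 : Summable (fun l : ℕ => Spow W U (l * N) F') :=
    (summable_nat_add_iff 1).mp hsumS
  have hATsplit : AT = Tpow W U N F' + ∑' l : ℕ, Tpow W U ((l + 2) * N) F' := by
    rw [hAT, Summable.tsum_eq_zero_add hsumT]
    norm_num
  have hASsplit : (∑' l : ℕ, Spow W U (l * N) F') = F' + AS := by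
    rw [Summable.tsum_eq_zero_add hsumS0]
    congr 1
    simpa using Spow_zero' W U F'
  have hTfix : Tpow W U N G = G := by
    calc Tpow W U N G = Tpow W U N F' + Tpow W U N AT + Tpow W U N AS := by
          rw [hG, hadd, hadd]
    _ = Tpow W U N F' + (∑' l : ℕ, Tpow W U ((l + 2) * N) F') + (F' + AS) := by
          rw [hmapT, hmapS, hASsplit]
    _ = F' + (Tpow W U N F' + ∑' l : ℕ, Tpow W U ((l + 2) * N) F') + AS := by abel
    _ = F' + AT + AS := by rw [← hATsplit]
    _ = G := hG.symm
  have hSfix : Spow W U N G = G := by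
    conv_lhs => rw [← hTfix]
    rw [Spow_Tpow W U hU]
  have hTper : ∀ j : ℕ, Tpow W U (j * N) G = G := by
    intro j
    induction j with
    | zero => simpa using Tpow_zero' W U G
    | succ j ih => rw [Nat.succ_mul, Tpow_add', hTfix, ih]
  have hSper : ∀ j : ℕ, Spow W U (j * N) G = G := by
    intro j
    induction j with
    | zero => simpa using Spow_zero' W U G
    | succ j ih => rw [Nat.succ_mul, Spow_add', hSfix, ih]
  -- compactness
  have hF'c : IsCompactOperator F' := hF.clm_comp P
  have hATc : IsCompactOperator AT := by
    refine isCompactOperator_of_tendsto hsumT.hasSum.tendsto_sum_nat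
      (Filter.Eventually.of_forall fun s => ?_)
    exact Submodule.sum_mem (B0 (H := H)) fun l _ => Tpow_mem W U _ F' hF'c
  have hASc : IsCompactOperator AS := by
    refine isCompactOperator_of_tendsto hsumS.hasSum.tendsto_sum_nat
      (Filter.Eventually.of_forall fun s => ?_)
    exact Submodule.sum_mem (B0 (H := H)) fun l _ => Spow_mem W U _ F' hF'c
  have hGc : IsCompactOperator G := by
    have : G ∈ B0 (H := H) :=
      Submodule.add_mem _ (Submodule.add_mem _ hF'c hATc) hASc
    exact this
  exact ⟨G, hGc, ⟨N, hNpos, hTper, hSper⟩, hnorm⟩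

/-- sufficient condition for density of the periodic elements of
`{T^n}` and `{S^n}` in `B₀(H)`. -/
theorem stmt14 (b : HilbertBasis ℕ ℂ H) (W : H ≃L[ℂ] H) (U : H →L[ℂ] H)
    (hU : U ∈ unitary (H →L[ℂ] H))
    (hyp : ∀ m : ℕ, ∃ n : ℕ → ℕ, StrictMono n ∧
      (∀ k, Summable (fun l : ℕ => ‖((W : H →L[ℂ] H) ^ ((l + 1) * n k)) ∘L Pproj b m‖) ∧
        Summable (fun l : ℕ => ‖((W.symm : H →L[ℂ] H) ^ ((l + 1) * n k)) ∘L Pproj b m‖)) ∧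
      Filter.Tendsto
        (fun k => ∑' l : ℕ, ‖((W : H →L[ℂ] H) ^ ((l + 1) * n k)) ∘L Pproj b m‖)
        atTop (nhds 0) ∧
      Filter.Tendsto
        (fun k => ∑' l : ℕ, ‖((W.symm : H →L[ℂ] H) ^ ((l + 1) * n k)) ∘L Pproj b m‖)
        atTop (nhds 0)) :
    (∀ F : H →L[ℂ] H, IsCompactOperator F → ∀ ε > (0 : ℝ),
      ∃ G : H →L[ℂ] H, IsCompactOperator G ∧
        (∃ N' : ℕ, 0 < N' ∧ ∀ k : ℕ, Tpow W U (k * N') G = G) ∧ ‖F - G‖ < ε) ∧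
    (∀ F : H →L[ℂ] H, IsCompactOperator F → ∀ ε > (0 : ℝ),
      ∃ G : H →L[ℂ] H, IsCompactOperator G ∧
        (∃ N' : ℕ, 0 < N' ∧ ∀ k : ℕ, Spow W U (k * N') G = G) ∧ ‖F - G‖ < ε) := by
  constructor
  · intro F hF ε hε
    obtain ⟨G, hGc, ⟨N', hN', hT, hS⟩, hlt⟩ :=
      exists_periodic_close b W U hU hyp F hF ε hε
    exact ⟨G, hGc, ⟨N', hN', hT⟩, hlt⟩
  · intro F hF ε hε
    obtain ⟨G, hGc, ⟨N', hN', hT, hS⟩, hlt⟩ :=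
      exists_periodic_close b W U hU hyp F hF ε hε
    exact ⟨G, hGc, ⟨N', hN', hS⟩, hlt⟩

end
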